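/- Let M be a number field that is Galois over ℚ with m = [M : ℚ]. Let A be the (m+1)×(m+1) integer matrix whose row with index r (for r = 0, 1, …, m) is (r^m, r^{m−1}, …, r, 1). Let C be a positive integer with C ≥ (m+1)² and such that (m+1)²·|det(A')| < C for every m×m submatrix A' of A obtained by deleting one row and one column. Let α ∈ 𝒪_M with α ∉ {0, 1, …, m}, and set u = C·α·(1 − α)·(2 − α)···(m − α) (a nonzero element of 𝒪_M). Then for every σ ∈ Gal(M/ℚ) and every nonzero ideal I of 𝒪_M with I ⊆ u^{m²}·𝒪_M, one has |N_{M/ℚ}(α − σ(α))| < absNorm(I). -/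

import Mathlib

open NumberField Polynomial Finset

/-- Compatibility shim: the complex absolute value as an `AbsoluteValue`. -/
noncomputable def Complex.abs : AbsoluteValue ℂ ℝ := IsAbsoluteValue.toAbsoluteValue (norm : ℂ → ℝ)

lemma Complex.abs_apply (z : ℂ) : Complex.abs z = ‖z‖ := rfl

lemma Complex.abs_natCast (n : ℕ) : Complex.abs (n : ℂ) = n := by simp [Complex.abs_apply]

lemma Complex.abs_intCast (n : ℤ) : Complex.abs (n : ℂ) = |(n : ℝ)| := by
  simp [Complex.abs_apply]

lemma Complex.abs_ofReal (r : ℝ) : Complex.abs (r : ℂ) = |r| := by simp [Complex.abs_apply]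

/-- Coefficients of `∏ (X - i)` over a finite set of naturals are bounded by `∏ (1+i)`. -/
lemma aux_coeff_prod_bound (t : Finset ℕ) (j : ℕ) :
    Complex.abs ((∏ i ∈ t, (X - Polynomial.C (i : ℂ))).coeff j) ≤ ∏ i ∈ t, (1 + (i : ℝ)) := by
  classical
  induction t using Finset.induction_on generalizing j with
  | empty =>
    simp only [Finset.prod_empty, Polynomial.coeff_one]
    split <;> simp
  | insert a t ha ih =>
    set P : Polynomial ℂ := ∏ i ∈ t, (X - Polynomial.C (i:ℂ)) with hP
    set B : ℝ := ∏ i ∈ t, (1 + (i:ℝ)) with hB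
    have hB0 : (0:ℝ) ≤ B := Finset.prod_nonneg fun i _ => by positivity
    rw [Finset.prod_insert ha, Finset.prod_insert ha, sub_mul, ← hP, ← hB]
    cases j with
    | zero =>
      rw [Polynomial.coeff_sub, Polynomial.mul_coeff_zero, Polynomial.mul_coeff_zero]
      simp only [Polynomial.coeff_X_zero, Polynomial.coeff_C_zero, zero_mul, zero_sub]
      rw [map_neg_eq_map, map_mul, Complex.abs_natCast]
      have h1 : (a:ℝ) * Complex.abs (P.coeff 0) ≤ (a:ℝ) * B :=
        mul_le_mul_of_nonneg_left (ih 0) (Nat.cast_nonneg a)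
      have h2 : (a:ℝ) * B ≤ (1 + (a:ℝ)) * B := by nlinarith
      linarith
    | succ j =>
      rw [Polynomial.coeff_sub, Polynomial.coeff_X_mul, Polynomial.coeff_C_mul]
      have h0 : Complex.abs (P.coeff j - (a:ℂ) * P.coeff (j+1))
          ≤ Complex.abs (P.coeff j) + Complex.abs ((a:ℂ) * P.coeff (j+1)) :=
        Complex.abs.sub_le_add _ _
      have h1 : Complex.abs ((a:ℂ) * P.coeff (j+1)) ≤ (a:ℝ) * B := by
        rw [map_mul, Complex.abs_natCast]
        exact mul_le_mul_of_nonneg_left (ih (j+1)) (Nat.cast_nonneg a)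
      have h2 : Complex.abs (P.coeff j) ≤ B := ih j
      have : (1 + (a:ℝ)) * B = B + (a:ℝ) * B := by ring
      rw [this]
      linarith

set_option maxHeartbeats 1000000 in
/-- Coefficient bound for Lagrange basis polynomials at nodes `0,…,m`. -/
lemma aux_basis_coeff_bound (m k j : ℕ) (hk : k ∈ Finset.range (m+1)) :
    Complex.abs ((Lagrange.basis (Finset.range (m+1)) (fun i : ℕ => (i:ℂ)) k).coeff j)
      ≤ ((m:ℝ)+1)^m := by
  classical
  unfold Lagrange.basis
  have hrw : ∀ i ∈ (Finset.range (m+1)).erase k,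
      Lagrange.basisDivisor ((k:ℕ) : ℂ) ((i:ℕ) : ℂ)
        = Polynomial.C (((k:ℂ) - (i:ℂ))⁻¹) * (X - Polynomial.C (i:ℂ)) := fun i _ => rfl
  rw [Finset.prod_congr rfl hrw, Finset.prod_mul_distrib, ← map_prod, Polynomial.coeff_C_mul,
    map_mul]
  have h1 : Complex.abs (∏ i ∈ (Finset.range (m+1)).erase k, ((k:ℂ) - (i:ℂ))⁻¹) ≤ 1 := by
    rw [map_prod]
    apply Finset.prod_le_one (fun i _ => Complex.abs.nonneg _)
    intro i hi
    have hne : (k:ℤ) - (i:ℤ) ≠ 0 := by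
      have := (Finset.mem_erase.mp hi).1
      intro h
      exact this (by omega)
    have : ((k:ℂ) - (i:ℂ)) = (((k:ℤ) - (i:ℤ) : ℤ) : ℂ) := by push_cast; ring
    rw [this, map_inv₀, Complex.abs_intCast]
    have : (1:ℝ) ≤ |((k:ℤ) - (i:ℤ) : ℤ)| := by
      exact_mod_cast Int.one_le_abs (by exact_mod_cast hne)
    rw [inv_le_one_iff₀]
    right
    exact_mod_cast this
  have h2 : Complex.abs ((∏ i ∈ (Finset.range (m+1)).erase k, (X - Polynomial.C (i:ℂ))).coeff j)
      ≤ ((m:ℝ)+1)^m := by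
    refine le_trans (aux_coeff_prod_bound _ j) ?_
    have hcard : ((Finset.range (m+1)).erase k).card = m := by
      rw [Finset.card_erase_of_mem hk, Finset.card_range]
      omega
    calc ∏ i ∈ (Finset.range (m+1)).erase k, (1 + (i:ℝ))
        ≤ ∏ _i ∈ (Finset.range (m+1)).erase k, ((m:ℝ)+1) := by
          apply Finset.prod_le_prod (fun i _ => by positivity)
          intro i hi
          have : i < m + 1 := Finset.mem_range.mp (Finset.mem_of_mem_erase hi)
          have : (i:ℝ) ≤ m := by exact_mod_cast Nat.lt_succ_iff.mp this
          linarith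
      _ = ((m:ℝ)+1) ^ (((Finset.range (m+1)).erase k).card) := Finset.prod_const _
      _ = ((m:ℝ)+1)^m := by rw [hcard]
  have h3 := mul_le_mul h1 h2 (Complex.abs.nonneg _) zero_le_one
  rw [one_mul] at h3
  exact h3

set_option maxHeartbeats 2000000 in
/-- (Proposition on norm bounds.)  Let `M/ℚ` be Galois of degree `m`, `A` the
`(m+1)×(m+1)` matrix with row `r` equal to `(r^m, …, r, 1)`, and `C ≥ (m+1)²` a positive
integer with `(m+1)²·|det A'| < C` for every `m×m` minor `A'` of `A`.  For `α ∈ 𝒪_M` with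
`α ∉ {0, …, m}` and `u = C·α·(1−α)···(m−α)`, every nonzero ideal `I ⊆ u^{m²}·𝒪_M` satisfies
`|N_{M/ℚ}(α − σα)| < absNorm I` for all `σ ∈ Gal(M/ℚ)`. -/
theorem stmt_6 (M : Type*) [Field M] [NumberField M] [IsGalois ℚ M]
    (m : ℕ) (hm : m = Module.finrank ℚ M)
    (A : Matrix (Fin (m + 1)) (Fin (m + 1)) ℤ)
    (hA : ∀ r c : Fin (m + 1), A r c = (r : ℤ) ^ (m - (c : ℕ)))
    (C : ℕ) (hC0 : 0 < C) (hC1 : (m + 1) ^ 2 ≤ C)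
    (hC2 : ∀ i j : Fin (m + 1),
      ((m : ℤ) + 1) ^ 2 * |(A.submatrix i.succAbove j.succAbove).det| < (C : ℤ))
    (α : 𝓞 M) (hα : ∀ k : ℕ, k ≤ m → α ≠ (k : 𝓞 M))
    (u : 𝓞 M) (hu : u = (C : 𝓞 M) * α * ∏ i ∈ Finset.Icc 1 m, ((i : 𝓞 M) - α))
    (σ : M ≃ₐ[ℚ] M) (I : Ideal (𝓞 M)) (hI : I ≠ ⊥)
    (hIu : I ≤ Ideal.span {u ^ m ^ 2}) :
    |Algebra.norm ℚ (algebraMap (𝓞 M) M α - σ (algebraMap (𝓞 M) M α))|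
      < (Ideal.absNorm I : ℚ) := by
  classical
  have habs0 : 0 < Ideal.absNorm I :=
    Nat.pos_of_ne_zero fun h => hI (Ideal.absNorm_eq_zero_iff.mp h)
  by_cases hfix : σ (algebraMap (𝓞 M) M α) = algebraMap (𝓞 M) M α
  · rw [hfix, sub_self, show Algebra.norm ℚ (0:M) = 0 from Algebra.norm_zero, abs_zero]
    exact_mod_cast habs0
  set α' : M := algebraMap (𝓞 M) M α with hα'def
  have hm1 : 0 < m := hm ▸ Module.finrank_pos
  have hm2 : 2 ≤ m := by
    rcases Nat.lt_or_ge m 2 with h | h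
    · exfalso
      have hm1' : Module.finrank ℚ M = 1 := by omega
      have hbot : (⊥ : Subalgebra ℚ M) = ⊤ := Subalgebra.bot_eq_top_of_finrank_eq_one hm1'
      have hmem : α' ∈ (⊥ : Subalgebra ℚ M) := hbot.symm ▸ Algebra.mem_top
      obtain ⟨q, hq⟩ := Algebra.mem_bot.mp hmem
      exact hfix (by rw [← hq, AlgEquiv.commutes])
    · exact h
  set nq : ℕ → ℚ := fun k => |Algebra.norm ℚ ((k : M) - α')| with hnqdef
  have hcast : ∀ k : ℕ, ((k : M) - α') = algebraMap (𝓞 M) M ((k : 𝓞 M) - α) := by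
    intro k; rw [map_sub, map_natCast]
  have hnq1 : ∀ k, k ≤ m → 1 ≤ nq k := by
    intro k hk
    have hne : (k : 𝓞 M) - α ≠ 0 := sub_ne_zero.mpr fun h => hα k hk h.symm
    have hnz : Algebra.norm ℤ ((k : 𝓞 M) - α) ≠ 0 := by
      rw [Algebra.norm_ne_zero_iff]
      exact hne
    have h1 : (1 : ℤ) ≤ |Algebra.norm ℤ ((k : 𝓞 M) - α)| := Int.one_le_abs (by exact_mod_cast hnz)
    have h2 : ((|Algebra.norm ℤ ((k : 𝓞 M) - α)| : ℤ) : ℚ) = nq k := by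
      rw [hnqdef, Int.cast_abs, Algebra.coe_norm_int, RingOfIntegers.coe_eq_algebraMap,
        ← hcast k]
    rw [← h2]
    exact_mod_cast h1
  set Nr : ℚ := ∏ k ∈ Finset.range (m+1), nq k with hNrdef
  have hnq1' : ∀ k ∈ Finset.range (m+1), 1 ≤ nq k :=
    fun k hk => hnq1 k (Nat.lt_succ_iff.mp (Finset.mem_range.mp hk))
  have hNr1 : 1 ≤ Nr := by
    rw [hNrdef]
    calc (1:ℚ) = ∏ _k ∈ Finset.range (m+1), 1 := by rw [Finset.prod_const_one]
      _ ≤ ∏ k ∈ Finset.range (m+1), nq k :=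
          Finset.prod_le_prod (fun i _ => zero_le_one) hnq1'
  have hnqle : ∀ k ∈ Finset.range (m+1), nq k ≤ Nr := by
    intro k hk
    rw [hNrdef, ← Finset.mul_prod_erase _ _ hk]
    refine le_mul_of_one_le_right (le_trans zero_le_one (hnq1' k hk)) ?_
    calc (1:ℚ) = ∏ _k ∈ (Finset.range (m+1)).erase k, 1 := by rw [Finset.prod_const_one]
      _ ≤ ∏ i ∈ (Finset.range (m+1)).erase k, nq i :=
          Finset.prod_le_prod (fun i _ => zero_le_one)
            (fun i hi => hnq1' i (Finset.mem_of_mem_erase hi))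
  have hNu : |Algebra.norm ℚ (algebraMap (𝓞 M) M u)| = (C:ℚ)^m * Nr := by
    have hu' : algebraMap (𝓞 M) M u
        = (C : M) * α' * ∏ i ∈ Finset.Icc 1 m, ((i : M) - α') := by
      simp only [hu, map_mul, map_natCast, map_prod, map_sub, ← hα'def]
    have hCM : ((C : ℕ) : M) = algebraMap ℚ M ((C : ℕ) : ℚ) := by
      rw [map_natCast]
    have hnormC : Algebra.norm ℚ ((C : ℕ) : M) = ((C : ℕ) : ℚ) ^ m := by
      rw [hCM, Algebra.norm_algebraMap, hm]
    have hna : |Algebra.norm ℚ α'| = nq 0 := by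
      have h0 : ((0 : ℕ) : M) - α' = (-1 : M) * α' := by push_cast; ring
      have hn1 : Algebra.norm ℚ (-1 : M) = (-1 : ℚ) ^ m := by
        rw [show (-1 : M) = algebraMap ℚ M (-1 : ℚ) by rw [map_neg, map_one],
          Algebra.norm_algebraMap, hm]
      rw [hnqdef]
      simp only []
      rw [h0, map_mul, hn1, abs_mul, abs_pow, abs_neg, abs_one, one_pow, one_mul]
    have hsplit : Nr = nq 0 * ∏ i ∈ Finset.Icc 1 m, nq i := by
      rw [hNrdef]
      have h1 : Finset.range (m+1) = Finset.Icc 0 m := by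
        rw [Finset.range_eq_Ico, Finset.Ico_add_one_right_eq_Icc]
      have h2 : Finset.Icc 0 m = insert 0 (Finset.Icc 1 m) := by
        ext x
        simp only [Finset.mem_Icc, Finset.mem_insert]
        omega
      rw [h1, h2, Finset.prod_insert (by simp)]
    rw [hu', map_mul, map_mul, abs_mul, abs_mul, hnormC, map_prod, Finset.abs_prod, hna,
      abs_pow, Nat.abs_cast, hsplit]
    ring
  have hkey : ((C:ℚ)^m * Nr)^(m^2) ≤ (Ideal.absNorm I : ℚ) := by
    have h1 : Ideal.absNorm (Ideal.span {u ^ m ^ 2}) ∣ Ideal.absNorm I :=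
      Ideal.absNorm_dvd_absNorm_of_le hIu
    have h2 : Ideal.absNorm (Ideal.span {u ^ m ^ 2}) = (Algebra.norm ℤ u).natAbs ^ m ^ 2 := by
      rw [Ideal.absNorm_span_singleton, map_pow, Int.natAbs_pow]
    have h3 : (Algebra.norm ℤ u).natAbs ^ m ^ 2 ≤ Ideal.absNorm I := h2 ▸ Nat.le_of_dvd habs0 h1
    have h4 : (((Algebra.norm ℤ u).natAbs : ℤ) : ℚ) = (C:ℚ)^m * Nr := by
      rw [Int.cast_natCast, Nat.cast_natAbs, Int.cast_abs, Algebra.coe_norm_int,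
        RingOfIntegers.coe_eq_algebraMap, hNu]
    calc ((C:ℚ)^m * Nr)^(m^2) = ((((Algebra.norm ℤ u).natAbs : ℤ) : ℚ))^(m^2) := by rw [h4]
      _ = (((Algebra.norm ℤ u).natAbs ^ m ^ 2 : ℕ) : ℚ) := by
            push_cast [Nat.cast_natAbs]
            ring
      _ ≤ (Ideal.absNorm I : ℚ) := by exact_mod_cast h3
  have hmain : |Algebra.norm ℚ (α' - σ α')| < ((C:ℚ)^m * Nr)^(m^2) := by
    have hcard : Fintype.card (M →ₐ[ℚ] ℂ) = m := by rw [AlgHom.card]; exact hm.symm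
    set χ : Polynomial ℂ := ∏ τ : M →ₐ[ℚ] ℂ, (X - Polynomial.C (τ α')) with hχ
    have hmon : χ.Monic := monic_prod_of_monic _ _ fun τ _ => monic_X_sub_C _
    have hdeg : χ.natDegree = m := by
      rw [hχ, natDegree_prod _ _ (fun τ _ => X_sub_C_ne_zero (τ α'))]
      simp only [natDegree_X_sub_C]
      rw [Finset.sum_const, Finset.card_univ, hcard, smul_eq_mul, mul_one]
    have hvalabs : ∀ k : ℕ, Complex.abs (χ.eval ((k:ℕ):ℂ)) = ((nq k : ℚ) : ℝ) := by
      intro k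
      have h1 : χ.eval ((k:ℕ):ℂ) = ∏ τ : M →ₐ[ℚ] ℂ, (((k:ℕ):ℂ) - τ α') := by
        rw [hχ, eval_prod]
        exact Finset.prod_congr rfl fun τ _ => by rw [eval_sub, eval_X, eval_C]
      have h2 : ∀ τ : M →ₐ[ℚ] ℂ, ((k:ℕ):ℂ) - τ α' = τ (((k:ℕ):M) - α') := by
        intro τ; rw [map_sub, map_natCast]
      rw [h1, Finset.prod_congr rfl fun τ _ => h2 τ,
        ← Algebra.norm_eq_prod_embeddings ℚ ℂ (((k:ℕ):M) - α'), eq_ratCast,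
        show ((Algebra.norm ℚ (((k:ℕ):M) - α') : ℚ) : ℂ)
            = (((Algebra.norm ℚ (((k:ℕ):M) - α') : ℚ) : ℝ) : ℂ) by push_cast; rfl,
        Complex.abs_ofReal, hnqdef]
      push_cast
      rfl
    set b : ℝ := (m:ℝ) * (((m:ℝ)+1)^(m+1) * ((Nr:ℚ):ℝ)) with hbdef
    have hNrR1 : (1:ℝ) ≤ ((Nr:ℚ):ℝ) := by exact_mod_cast hNr1
    have hpow1 : (1:ℝ) ≤ ((m:ℝ)+1)^(m+1) := one_le_pow₀ (by linarith [Nat.cast_nonneg (α := ℝ) m])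
    have hE1 : (1:ℝ) ≤ ((m:ℝ)+1)^(m+1) * ((Nr:ℚ):ℝ) := by nlinarith
    have hb1 : (1:ℝ) ≤ b := by
      have hm2' : (2:ℝ) ≤ (m:ℝ) := by exact_mod_cast hm2
      rw [hbdef]; nlinarith
    have hcoeff : ∀ j, Complex.abs (χ.coeff j) ≤ ((m:ℝ)+1)^(m+1) * ((Nr:ℚ):ℝ) := by
      intro j
      have hinj : Set.InjOn (fun i : ℕ => (i:ℂ)) (Finset.range (m+1)) :=
        fun a _ b _ h => Nat.cast_injective h
      have hdeglt : χ.degree < ((Finset.range (m+1)).card : ℕ) := by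
        rw [Finset.card_range, Polynomial.degree_eq_natDegree hmon.ne_zero, hdeg]
        exact_mod_cast Nat.lt_succ_self m
      have hrep := Lagrange.eq_interpolate (f := χ) hinj hdeglt
      rw [hrep, Lagrange.interpolate_apply, Polynomial.finset_sum_coeff]
      refine le_trans (Complex.abs.sum_le _ _) ?_
      have hterm : ∀ k ∈ Finset.range (m+1),
          Complex.abs ((Polynomial.C (χ.eval ((k:ℕ):ℂ))
            * Lagrange.basis (Finset.range (m+1)) (fun i : ℕ => (i:ℂ)) k).coeff j)
          ≤ ((Nr:ℚ):ℝ) * ((m:ℝ)+1)^m := by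
        intro k hk
        rw [Polynomial.coeff_C_mul, map_mul, hvalabs k]
        refine mul_le_mul ?_ (aux_basis_coeff_bound m k j hk) (Complex.abs.nonneg _)
          (le_trans zero_le_one hNrR1)
        exact_mod_cast hnqle k hk
      refine le_trans (Finset.sum_le_sum hterm) ?_
      rw [Finset.sum_const, Finset.card_range, nsmul_eq_mul]
      have : ((m:ℝ)+1) * (((Nr:ℚ):ℝ) * ((m:ℝ)+1)^m) = ((m:ℝ)+1)^(m+1) * ((Nr:ℚ):ℝ) := by
        rw [pow_succ]; ring
      rw [← this]
      apply le_of_eq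
      congr 1
      push_cast
      ring
    have hroot : ∀ τ : M →ₐ[ℚ] ℂ, Complex.abs (τ α') ≤ b := by
      intro τ
      set z : ℂ := τ α' with hzdef
      have hzero : χ.eval z = 0 := by
        rw [hχ, eval_prod]
        refine Finset.prod_eq_zero (Finset.mem_univ τ) ?_
        rw [eval_sub, eval_X, eval_C, hzdef, sub_self]
      by_cases h1 : Complex.abs z ≤ 1
      · exact le_trans h1 hb1
      · push_neg at h1
        have hsum : ∑ i ∈ Finset.range (m+1), χ.coeff i * z^i = 0 := by
          have h := Polynomial.eval_eq_sum_range (p := χ) z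
          rw [hdeg] at h
          rw [← h]
          exact hzero
        rw [Finset.sum_range_succ] at hsum
        have hlead : χ.coeff m = 1 := by
          have h := hmon.coeff_natDegree
          rwa [hdeg] at h
        rw [hlead, one_mul] at hsum
        have hzm : z^m = -∑ i ∈ Finset.range m, χ.coeff i * z^i := by
          linear_combination hsum
        have habs2 : (Complex.abs z)^m ≤ ∑ i ∈ Finset.range m,
            (((m:ℝ)+1)^(m+1) * ((Nr:ℚ):ℝ)) * (Complex.abs z)^(m-1) := by
          rw [← map_pow, hzm, map_neg_eq_map]
          refine le_trans (Complex.abs.sum_le _ _) ?_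
          refine Finset.sum_le_sum ?_
          intro i hi
          have him := Finset.mem_range.mp hi
          rw [map_mul, map_pow]
          have hle1 : (Complex.abs z)^i ≤ (Complex.abs z)^(m-1) :=
            pow_le_pow_right₀ (le_of_lt h1) (by omega)
          have := mul_le_mul (hcoeff i) hle1 (pow_nonneg (Complex.abs.nonneg _) i)
            (le_trans zero_le_one hE1)
          exact this
        rw [Finset.sum_const, Finset.card_range, nsmul_eq_mul] at habs2
        have hpows : (Complex.abs z)^m = Complex.abs z * (Complex.abs z)^(m-1) := by
          rw [← pow_succ']
          congr 1
          omega
        rw [hpows] at habs2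
        have hppos : (0:ℝ) < (Complex.abs z)^(m-1) := pow_pos (lt_trans zero_lt_one h1) _
        have habs3 : Complex.abs z * (Complex.abs z)^(m-1) ≤ b * (Complex.abs z)^(m-1) := by
          rw [hbdef]
          nlinarith
        exact le_of_mul_le_mul_right habs3 hppos
    have hLHS : ((|Algebra.norm ℚ (α' - σ α')| : ℚ) : ℝ) ≤ (2 * b)^m := by
      have h0 : (algebraMap ℚ ℂ) (Algebra.norm ℚ (α' - σ α'))
          = ∏ τ : M →ₐ[ℚ] ℂ, τ (α' - σ α') :=
        Algebra.norm_eq_prod_embeddings ℚ ℂ _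
      have habs : ((|Algebra.norm ℚ (α' - σ α')| : ℚ) : ℝ)
          = Complex.abs (∏ τ : M →ₐ[ℚ] ℂ, τ (α' - σ α')) := by
        rw [← h0, eq_ratCast,
          show ((Algebra.norm ℚ (α' - σ α') : ℚ) : ℂ)
              = (((Algebra.norm ℚ (α' - σ α') : ℚ) : ℝ) : ℂ) by push_cast; rfl,
          Complex.abs_ofReal]
        push_cast
        rfl
      have hbound : ∀ τ : M →ₐ[ℚ] ℂ, Complex.abs (τ (α' - σ α')) ≤ 2 * b := by
        intro τ
        rw [map_sub]
        refine le_trans (Complex.abs.sub_le_add _ _) ?_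
        have h1 := hroot τ
        have h2 : Complex.abs (τ (σ α')) ≤ b := hroot (τ.comp σ.toAlgHom)
        linarith
      rw [habs, map_prod]
      calc ∏ τ : M →ₐ[ℚ] ℂ, Complex.abs (τ (α' - σ α'))
          ≤ ∏ _τ : M →ₐ[ℚ] ℂ, (2*b) :=
            Finset.prod_le_prod (fun τ _ => Complex.abs.nonneg _) (fun τ _ => hbound τ)
        _ = (2*b)^m := by rw [Finset.prod_const, Finset.card_univ, hcard]
    have hnum : (2 * b)^m < (((C:ℚ)^m * Nr : ℚ) : ℝ)^(m^2) := by
      have hm2' : (2:ℝ) ≤ (m:ℝ) := by exact_mod_cast hm2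
      have hCR : ((m:ℝ)+1)^2 ≤ (C:ℝ) := by exact_mod_cast hC1
      have h2m : 2 * (m:ℝ) ≤ ((m:ℝ)+1)^2 := by nlinarith
      have hPN : (0:ℝ) ≤ ((m:ℝ)+1)^(m+1) * ((Nr:ℚ):ℝ) := le_trans zero_le_one hE1
      have h2b : 2 * b ≤ ((m:ℝ)+1)^(m+3) * ((Nr:ℚ):ℝ) := by
        have hh := mul_le_mul_of_nonneg_left h2m hPN
        calc 2*b = (((m:ℝ)+1)^(m+1) * ((Nr:ℚ):ℝ)) * (2*(m:ℝ)) := by rw [hbdef]; ring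
          _ ≤ (((m:ℝ)+1)^(m+1) * ((Nr:ℚ):ℝ)) * ((m:ℝ)+1)^2 := hh
          _ = ((m:ℝ)+1)^(m+3) * ((Nr:ℚ):ℝ) := by
              rw [show ((m:ℝ)+1)^(m+3) = ((m:ℝ)+1)^(m+1)*((m:ℝ)+1)^2 by
                rw [← pow_add]]
              ring
      have h2b0 : (0:ℝ) ≤ 2*b := by linarith
      have hNR0 : (0:ℝ) < ((Nr:ℚ):ℝ) := lt_of_lt_of_le zero_lt_one hNrR1
      calc (2*b)^m ≤ (((m:ℝ)+1)^(m+3) * ((Nr:ℚ):ℝ))^m := pow_le_pow_left₀ h2b0 h2b m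
        _ = ((m:ℝ)+1)^((m+3)*m) * ((Nr:ℚ):ℝ)^m := by rw [mul_pow, ← pow_mul]
        _ < ((m:ℝ)+1)^(2*m^3) * ((Nr:ℚ):ℝ)^m := by
            have h1m : (1:ℝ) < (m:ℝ)+1 := by linarith
            have hlt : (m+3)*m < 2*m^3 := by
              have h1 : 2*m ≤ m*m := Nat.mul_le_mul hm2 (Nat.le_refl m)
              have h2 : 2*(m*m) ≤ m*(m*m) := Nat.mul_le_mul hm2 (Nat.le_refl (m*m))
              have h3 : m^3 = m*(m*m) := by ring
              nlinarith
            exact mul_lt_mul_of_pos_right (pow_lt_pow_right₀ h1m hlt) (pow_pos hNR0 m)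
        _ ≤ ((C:ℝ))^(m^3) * ((Nr:ℚ):ℝ)^(m^2) := by
            have hA : ((m:ℝ)+1)^(2*m^3) ≤ (C:ℝ)^(m^3) := by
              rw [show (2*m^3) = 2*(m^3) from rfl, pow_mul]
              exact pow_le_pow_left₀ (by positivity) hCR (m^3)
            have hB : ((Nr:ℚ):ℝ)^m ≤ ((Nr:ℚ):ℝ)^(m^2) :=
              pow_le_pow_right₀ hNrR1 (Nat.le_self_pow two_ne_zero m)
            exact mul_le_mul hA hB (le_of_lt (pow_pos hNR0 m)) (by positivity)
        _ = (((C:ℚ)^m * Nr : ℚ) : ℝ)^(m^2) := by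
            have hc : (((C:ℚ)^m * Nr : ℚ) : ℝ) = (C:ℝ)^m * ((Nr:ℚ):ℝ) := by push_cast; rfl
            have hmm : m^3 = m*m^2 := by ring
            rw [hc, mul_pow, ← pow_mul, hmm]
    have : ((|Algebra.norm ℚ (α' - σ α')| : ℚ) : ℝ) < (((C:ℚ)^m * Nr : ℚ) : ℝ)^(m^2) :=
      lt_of_le_of_lt hLHS hnum
    exact_mod_cast this
  exact lt_of_lt_of_le hmain hkey
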